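/- Let G be a right-linear context-free grammar and let F be the FSA derived from G by the basic approximation algorithm, i.e., the flattening F_≡ of the recognizer R(G) unfolded by the collapsing stack congruence. Then L(G) = L(F). -/

import Mathlib

/-!
Infrastructure for finite-state approximation of context-free grammars
(Pereira & Wright). We use Mathlib's `ContextFreeGrammar`.

A dotted rule `A → α · β` is represented as `(some A, α, β)`;
the auxiliary dotted rules `S' → · S` and `S' → S ·` are represented with
first component `none`.  States of the LR(0) characteristic machine `M(G)`
are sets of dotted rules (the determinization by the subset construction);
the transition function `next` is total, with the empty set `∅` playing the
role of "undefined", so genuine transitions are those with nonempty target.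
-/

namespace LRApprox

universe uN uT

variable {T : Type uT}

/-- Context-free grammar as in the older Mathlib (nonterminals in an arbitrary universe `uN`). -/
structure ContextFreeGrammar (T : Type uT) where
  /-- Type of nonterminals. -/
  NT : Type uN
  /-- Initial nonterminal. -/
  initial : NT
  /-- Rewrite rules. -/
  rules : Finset (ContextFreeRule T NT)

/-- One rewriting step by a rule of `g`. -/
def ContextFreeGrammar.Produces (g : ContextFreeGrammar.{uN} T) (u v : List (Symbol T g.NT)) :
    Prop :=
  ∃ r ∈ g.rules, r.Rewrites u v

/-- Finitely many rewriting steps. -/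
abbrev ContextFreeGrammar.Derives (g : ContextFreeGrammar.{uN} T) :
    List (Symbol T g.NT) → List (Symbol T g.NT) → Prop :=
  Relation.ReflTransGen g.Produces

/-- `g` derives `s` from its initial nonterminal. -/
def ContextFreeGrammar.Generates (g : ContextFreeGrammar.{uN} T) (s : List (Symbol T g.NT)) :
    Prop :=
  g.Derives [Symbol.nonterminal g.initial] s

/-- The language generated by `g`. -/
def ContextFreeGrammar.language (g : ContextFreeGrammar.{uN} T) : Language T :=
  { w : List T | g.Generates (w.map Symbol.terminal) }

/-- A dotted rule `A → α · β`; `none` as first component stands for the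
auxiliary start symbol `S'`. -/
abbrev DottedRule (g : ContextFreeGrammar.{uN} T) : Type _ :=
  Option g.NT × List (Symbol T g.NT) × List (Symbol T g.NT)

/-- A state of the characteristic machine `M(G)`: a set of dotted rules. -/
abbrev LRState (g : ContextFreeGrammar.{uN} T) : Type _ := Set (DottedRule g)

/-- Closure of a set of dotted rules: whenever `A → α · B β` is present and
`B → γ` is a rule, add `B → · γ`. -/
inductive Closure (g : ContextFreeGrammar.{uN} T) (R : Set (DottedRule g)) :
    DottedRule g → Prop
  | base {d : DottedRule g} : d ∈ R → Closure g R d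
  | step {A : Option g.NT} {α β : List (Symbol T g.NT)} {B : g.NT}
      (r : ContextFreeRule T g.NT) :
      Closure g R (A, α, Symbol.nonterminal B :: β) →
      r ∈ g.rules → r.input = B → Closure g R (some B, [], r.output)

/-- The transition function `δ` of `M(G)`: shift the dot over `X` and take the
closure.  The empty set plays the role of "undefined". -/
def next (g : ContextFreeGrammar.{uN} T) (s : LRState g) (X : Symbol T g.NT) : LRState g :=
  {d | Closure g {d' | ∃ A α β, (A, α, X :: β) ∈ s ∧ d' = (A, α ++ [X], β)} d}

/-- The start state `s₀` of `M(G)`: the closure of `{S' → · S}`. -/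
def start (g : ContextFreeGrammar.{uN} T) : LRState g :=
  {d | Closure g {(none, [], [Symbol.nonterminal g.initial])} d}

/-- The dotted rule `S' → S ·`. -/
def finalDR (g : ContextFreeGrammar.{uN} T) : DottedRule g :=
  (none, [Symbol.nonterminal g.initial], [])

/-- A state is final iff it contains `S' → S ·`. -/
def IsFinal (g : ContextFreeGrammar.{uN} T) (s : LRState g) : Prop := finalDR g ∈ s

/-- Iterated transition function, extended to strings of symbols. -/
def nextStar (g : ContextFreeGrammar.{uN} T) (s : LRState g)
    (α : List (Symbol T g.NT)) : LRState g :=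
  α.foldl (next g) s

/-- A stack of the shift-reduce recognizer: a sequence of (state, symbol) pairs. -/
abbrev Stack (g : ContextFreeGrammar.{uN} T) : Type _ :=
  List (LRState g × Symbol T g.NT)

/-- `Stacks g s σ` iff `σ = ⟨q₀,X₀⟩…⟨q_k,X_k⟩` with `q₀ = s₀`,
`q_i = δ(q_{i-1},X_{i-1})` and `s = δ(q_k,X_k)`; in addition `Stacks s₀`
contains the empty sequence. -/
inductive Stacks (g : ContextFreeGrammar.{uN} T) : LRState g → Stack g → Prop
  | nil : Stacks g (start g) []
  | snoc {q : LRState g} {σ : Stack g} {X : Symbol T g.NT} :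
      Stacks g q σ → next g q X ≠ ∅ → Stacks g (next g q X) (σ ++ [(q, X)])

/-- A configuration `⟨s, σ, w⟩` of the shift-reduce recognizer `R(G)`. -/
structure Cfg (g : ContextFreeGrammar.{uN} T) where
  state : LRState g
  stack : Stack g
  input : List T

/-- A shift move of `R(G)`. -/
inductive ShiftStep (g : ContextFreeGrammar.{uN} T) : Cfg g → Cfg g → Prop
  | shift {s : LRState g} {σ : Stack g} {x : T} {w : List T} :
      next g s (Symbol.terminal x) ≠ ∅ →
      ShiftStep g ⟨s, σ, x :: w⟩
        ⟨next g s (Symbol.terminal x), σ ++ [(s, Symbol.terminal x)], w⟩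

/-- A reduce move of `R(G)`. -/
inductive ReduceStep (g : ContextFreeGrammar.{uN} T) : Cfg g → Cfg g → Prop
  | empty {s : LRState g} {σ : Stack g} {w : List T} {A : g.NT} :
      (some A, ([] : List (Symbol T g.NT)), ([] : List (Symbol T g.NT))) ∈ s →
      next g s (Symbol.nonterminal A) ≠ ∅ →
      ReduceStep g ⟨s, σ, w⟩
        ⟨next g s (Symbol.nonterminal A), σ ++ [(s, Symbol.nonterminal A)], w⟩
  | pop {s : LRState g} {σ τ : Stack g} {w : List T} {A : g.NT}
      {s₁ : LRState g} {X₁ : Symbol T g.NT} :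
      (some A, ((s₁, X₁) :: τ).map Prod.snd, ([] : List (Symbol T g.NT))) ∈ s →
      next g s₁ (Symbol.nonterminal A) ≠ ∅ →
      ReduceStep g ⟨s, σ ++ (s₁, X₁) :: τ, w⟩
        ⟨next g s₁ (Symbol.nonterminal A), σ ++ [(s₁, Symbol.nonterminal A)], w⟩

/-- A move of the shift-reduce recognizer `R(G)`. -/
def Step (g : ContextFreeGrammar.{uN} T) (c c' : Cfg g) : Prop :=
  ShiftStep g c c' ∨ ReduceStep g c c'

/-- `R(G)` accepts `w`: some sequence of moves leads from the initial
configuration `⟨s₀, ε, w⟩` to a final configuration `⟨s, ⟨s₀,S⟩, ε⟩`, `s ∈ F`. -/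
def RAccepts (g : ContextFreeGrammar.{uN} T) (w : List T) : Prop :=
  ∃ s : LRState g, IsFinal g s ∧
    Relation.ReflTransGen (Step g) ⟨start g, [], w⟩
      ⟨s, [(start g, Symbol.nonterminal g.initial)], []⟩

/-- A stack congruence on `R(G)`: a family of equivalence relations on
`Stacks(s)`, compatible with pushing. -/
def IsStackCongruence (g : ContextFreeGrammar.{uN} T)
    (E : LRState g → Stack g → Stack g → Prop) : Prop :=
  (∀ s σ σ', E s σ σ' → Stacks g s σ ∧ Stacks g s σ') ∧
  (∀ s σ, Stacks g s σ → E s σ σ) ∧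
  (∀ s σ σ', E s σ σ' → E s σ' σ) ∧
  (∀ s σ₁ σ₂ σ₃, E s σ₁ σ₂ → E s σ₂ σ₃ → E s σ₁ σ₃) ∧
  (∀ s X σ σ', next g s X ≠ ∅ → E s σ σ' →
    E (next g s X) (σ ++ [(s, X)]) (σ' ++ [(s, X)]))

/-- A state of the unfolded recognizer `R_≡`: a state of `M(G)` together with
an equivalence class of stacks (represented as a set of stacks). -/
abbrev UState (g : ContextFreeGrammar.{uN} T) : Type _ := LRState g × Set (Stack g)

/-- Transition function `δ_≡` of the unfolded recognizer:
`δ_≡(⟨s,[σ]⟩, X) = ⟨δ(s,X), [σ⟨s,X⟩]⟩`. -/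
def uNext (g : ContextFreeGrammar.{uN} T) (E : LRState g → Stack g → Stack g → Prop)
    (p : UState g) (X : Symbol T g.NT) : UState g :=
  (next g p.1 X,
   {τ | Stacks g (next g p.1 X) τ ∧ ∃ σ ∈ p.2, E (next g p.1 X) τ (σ ++ [(p.1, X)])})

/-- Start state `⟨s₀, [ε]⟩` of the unfolded recognizer. -/
def uStart (g : ContextFreeGrammar.{uN} T)
    (E : LRState g → Stack g → Stack g → Prop) : UState g :=
  (start g, {τ | Stacks g (start g) τ ∧ E (start g) τ []})

/-- Genuine states of the unfolded recognizer: pairs `⟨s, [σ]_s⟩` with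
`σ ∈ Stacks(s)`. -/
def IsUState (g : ContextFreeGrammar.{uN} T)
    (E : LRState g → Stack g → Stack g → Prop) (p : UState g) : Prop :=
  ∃ σ, Stacks g p.1 σ ∧ p.2 = {τ | Stacks g p.1 τ ∧ E p.1 τ σ}

/-- Iterated `δ_≡`, extended to strings of symbols. -/
def uNextStar (g : ContextFreeGrammar.{uN} T)
    (E : LRState g → Stack g → Stack g → Prop)
    (p : UState g) (α : List (Symbol T g.NT)) : UState g :=
  α.foldl (uNext g E) p

/-- A configuration of the unfolded recognizer `R_≡`. -/
structure UCfg (g : ContextFreeGrammar.{uN} T) where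
  state : UState g
  stack : List (UState g × Symbol T g.NT)
  input : List T

/-- A shift move of the unfolded recognizer. -/
inductive UShiftStep (g : ContextFreeGrammar.{uN} T)
    (E : LRState g → Stack g → Stack g → Prop) : UCfg g → UCfg g → Prop
  | shift {p : UState g} {σ : List (UState g × Symbol T g.NT)} {x : T} {w : List T} :
      next g p.1 (Symbol.terminal x) ≠ ∅ →
      UShiftStep g E ⟨p, σ, x :: w⟩
        ⟨uNext g E p (Symbol.terminal x), σ ++ [(p, Symbol.terminal x)], w⟩

/-- A reduce move of the unfolded recognizer. -/
inductive UReduceStep (g : ContextFreeGrammar.{uN} T)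
    (E : LRState g → Stack g → Stack g → Prop) : UCfg g → UCfg g → Prop
  | empty {p : UState g} {σ : List (UState g × Symbol T g.NT)} {w : List T} {A : g.NT} :
      (some A, ([] : List (Symbol T g.NT)), ([] : List (Symbol T g.NT))) ∈ p.1 →
      next g p.1 (Symbol.nonterminal A) ≠ ∅ →
      UReduceStep g E ⟨p, σ, w⟩
        ⟨uNext g E p (Symbol.nonterminal A), σ ++ [(p, Symbol.nonterminal A)], w⟩
  | pop {p : UState g} {σ τ : List (UState g × Symbol T g.NT)} {w : List T} {A : g.NT}
      {p₁ : UState g} {X₁ : Symbol T g.NT} :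
      (some A, ((p₁, X₁) :: τ).map Prod.snd, ([] : List (Symbol T g.NT))) ∈ p.1 →
      next g p₁.1 (Symbol.nonterminal A) ≠ ∅ →
      UReduceStep g E ⟨p, σ ++ (p₁, X₁) :: τ, w⟩
        ⟨uNext g E p₁ (Symbol.nonterminal A), σ ++ [(p₁, Symbol.nonterminal A)], w⟩

/-- A move of the unfolded recognizer `R_≡`. -/
def UStep (g : ContextFreeGrammar.{uN} T)
    (E : LRState g → Stack g → Stack g → Prop) (c c' : UCfg g) : Prop :=
  UShiftStep g E c c' ∨ UReduceStep g E c c'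

/-- The unfolded recognizer `R_≡` accepts `w`. -/
def UAccepts (g : ContextFreeGrammar.{uN} T)
    (E : LRState g → Stack g → Stack g → Prop) (w : List T) : Prop :=
  ∃ p : UState g, IsFinal g p.1 ∧
    Relation.ReflTransGen (UStep g E) ⟨uStart g E, [], w⟩
      ⟨p, [(uStart g E, Symbol.nonterminal g.initial)], []⟩

/-- `Pop(p)`: the unfolded states reachable from `p` by a reduction. -/
def PopSet (g : ContextFreeGrammar.{uN} T)
    (E : LRState g → Stack g → Stack g → Prop) (p : UState g) : Set (UState g) :=
  {p' | ∃ (A : g.NT) (α : List (Symbol T g.NT)) (p'' : UState g),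
    IsUState g E p'' ∧
    (some A, α, ([] : List (Symbol T g.NT))) ∈ p.1 ∧
    (some A, ([] : List (Symbol T g.NT)), α) ∈ p''.1 ∧
    uNextStar g E p'' α = p ∧
    next g p''.1 (Symbol.nonterminal A) ≠ ∅ ∧
    uNext g E p'' (Symbol.nonterminal A) = p'}

/-- Paths in the flattening `F_≡` of the unfolded recognizer: terminal
transitions follow `δ_≡` and reductions become ε-transitions. -/
inductive FPath (g : ContextFreeGrammar.{uN} T)
    (E : LRState g → Stack g → Stack g → Prop) : UState g → List T → UState g → Prop
  | refl (p : UState g) : FPath g E p [] p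
  | shift {p : UState g} {x : T} {w : List T} {q : UState g} :
      next g p.1 (Symbol.terminal x) ≠ ∅ →
      FPath g E (uNext g E p (Symbol.terminal x)) w q → FPath g E p (x :: w) q
  | eps {p p' : UState g} {w : List T} {q : UState g} :
      p' ∈ PopSet g E p → FPath g E p' w q → FPath g E p w q

/-- The flattening `F_≡` accepts `w`. -/
def FAccepts (g : ContextFreeGrammar.{uN} T)
    (E : LRState g → Stack g → Stack g → Prop) (w : List T) : Prop :=
  ∃ q : UState g, IsFinal g q.1 ∧ FPath g E (uStart g E) w q

/-- A stack `⟨s₁,X₁⟩…⟨s_k,X_k⟩` is a loop if `δ(s_k,X_k) = s₁`. -/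
def IsLoop (g : ContextFreeGrammar.{uN} T) (τ : Stack g) : Prop :=
  ∃ p q : LRState g × Symbol T g.NT,
    τ.head? = some p ∧ τ.getLast? = some q ∧ next g q.1 q.2 = p.1

/-- A loop is minimal if no proper prefix of it is a loop. -/
def IsMinimalLoop (g : ContextFreeGrammar.{uN} T) (τ : Stack g) : Prop :=
  IsLoop g τ ∧ ∀ τ' : Stack g, τ' <+: τ → τ' ≠ τ → ¬ IsLoop g τ'

/-- A stack is collapsible if it contains a loop as a contiguous segment. -/
def Collapsible (g : ContextFreeGrammar.{uN} T) (σ : Stack g) : Prop :=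
  ∃ ρ τ υ : Stack g, σ = ρ ++ τ ++ υ ∧ IsLoop g τ

/-- `σ` immediately collapses to `σ'`: remove the earliest minimal loop. -/
def ImmediatelyCollapses (g : ContextFreeGrammar.{uN} T) (σ σ' : Stack g) : Prop :=
  ∃ ρ τ υ : Stack g, σ = ρ ++ τ ++ υ ∧ σ' = ρ ++ υ ∧ IsMinimalLoop g τ ∧
    ¬ ∃ ρ' τ' υ' : Stack g, σ = ρ' ++ τ' ++ υ' ∧ ρ' <+: ρ ∧ ρ' ≠ ρ ∧ IsLoop g τ'

/-- `σ` collapses to `σ'` by finitely many immediate collapses. -/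
def Collapses (g : ContextFreeGrammar.{uN} T) : Stack g → Stack g → Prop :=
  Relation.ReflTransGen (ImmediatelyCollapses g)

/-- Two stacks are collapsing-equivalent if they collapse to the same
uncollapsible stack. -/
def CollEquiv (g : ContextFreeGrammar.{uN} T) (σ σ' : Stack g) : Prop :=
  ∃ τ : Stack g, ¬ Collapsible g τ ∧ Collapses g σ τ ∧ Collapses g σ' τ

/-- The collapsing congruence: the restriction of collapsing equivalence to
the sets `Stacks(s)`. -/
def CollCong (g : ContextFreeGrammar.{uN} T) (s : LRState g) (σ σ' : Stack g) : Prop :=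
  Stacks g s σ ∧ Stacks g s σ' ∧ CollEquiv g σ σ'

/-- A CFG is left-linear if every rule has the form `A → Bβ` or `A → β`
with `β` a string of terminals. -/
def LeftLinear (g : ContextFreeGrammar.{uN} T) : Prop :=
  ∀ r ∈ g.rules, (∃ β : List T, r.output = β.map Symbol.terminal) ∨
    (∃ (B : g.NT) (β : List T), r.output = Symbol.nonterminal B :: β.map Symbol.terminal)

/-- A CFG is right-linear if every rule has the form `A → βB` or `A → β`
with `β` a string of terminals. -/
def RightLinear (g : ContextFreeGrammar.{uN} T) : Prop :=
  ∀ r ∈ g.rules, (∃ β : List T, r.output = β.map Symbol.terminal) ∨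
    (∃ (B : g.NT) (β : List T), r.output = β.map Symbol.terminal ++ [Symbol.nonterminal B])

/-- Reachable (genuine) states of `M(G)`. -/
def ReachableState (g : ContextFreeGrammar.{uN} T) (s : LRState g) : Prop :=
  s ≠ ∅ ∧ ∃ α : List (Symbol T g.NT), nextStar g (start g) α = s

end LRApprox

open LRApprox
namespace LRApprox

universe uN' uT'
variable {T : Type uT'} {g : ContextFreeGrammar.{uN'} T}

lemma ContextFreeGrammar.mem_language_iff (g : ContextFreeGrammar.{uN'} T) (w : List T) :
    w ∈ g.language ↔ g.Derives [Symbol.nonterminal g.initial] (w.map Symbol.terminal) :=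
  Iff.rfl

/-! ### Basic lemmas about the characteristic machine -/

lemma mem_next_base {s : LRState g} {A : Option g.NT} {α β : List (Symbol T g.NT)}
    {X : Symbol T g.NT} (h : (A, α, X :: β) ∈ s) :
    (A, α ++ [X], β) ∈ next g s X :=
  Closure.base ⟨A, α, β, h, rfl⟩

lemma next_ne_empty_of_mem {s : LRState g} {X : Symbol T g.NT} {d : DottedRule g}
    (h : d ∈ next g s X) : next g s X ≠ ∅ := by
  intro he
  rw [he] at h
  exact h

/-- Closedness of a state under the prediction (closure) rule. -/
def IsCl (s : LRState g) : Prop :=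
  ∀ {A : Option g.NT} {α β : List (Symbol T g.NT)} {B : g.NT},
    (A, α, Symbol.nonterminal B :: β) ∈ s →
    ∀ r ∈ g.rules, r.input = B → (some B, [], r.output) ∈ s

lemma isCl_setOf_closure (R : Set (DottedRule g)) : IsCl {d | Closure g R d} := by
  intro A α β B h r hr hi
  exact Closure.step r h hr hi

lemma isCl_start : IsCl (start g) := isCl_setOf_closure _

lemma isCl_next (s : LRState g) (X : Symbol T g.NT) : IsCl (next g s X) :=
  isCl_setOf_closure _

lemma nextStar_nil (s : LRState g) : nextStar g s [] = s := rfl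

lemma nextStar_cons (s : LRState g) (X : Symbol T g.NT) (γ : List (Symbol T g.NT)) :
    nextStar g s (X :: γ) = nextStar g (next g s X) γ := rfl

lemma nextStar_append (s : LRState g) (γ δ : List (Symbol T g.NT)) :
    nextStar g s (γ ++ δ) = nextStar g (nextStar g s γ) δ :=
  List.foldl_append

lemma nextStar_concat (s : LRState g) (γ : List (Symbol T g.NT)) (X : Symbol T g.NT) :
    nextStar g s (γ ++ [X]) = next g (nextStar g s γ) X :=
  List.foldl_concat _ _ _ _

lemma isCl_nextStar (s : LRState g) (hs : IsCl s) (γ : List (Symbol T g.NT)) :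
    IsCl (nextStar g s γ) := by
  induction γ generalizing s with
  | nil => exact hs
  | cons X γ ih => exact ih _ (isCl_next _ _)

/-- The consumed part of any item in `nextStar start γ` is a suffix of `γ`. -/
lemma consumed_suffix {γ : List (Symbol T g.NT)} :
    ∀ {d : DottedRule g}, d ∈ nextStar g (start g) γ → ∃ γ₀, γ = γ₀ ++ d.2.1 := by
  induction γ using List.reverseRecOn with
  | nil =>
    intro d hd
    induction hd with
    | base h => rw [Set.mem_singleton_iff] at h; subst h; exact ⟨[], rfl⟩
    | step r h hr hi ih => exact ⟨[], rfl⟩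
  | append_singleton γ X ih =>
    intro d hd
    rw [nextStar_concat] at hd
    induction hd with
    | base h =>
      obtain ⟨A, α, β, hmem, rfl⟩ := h
      obtain ⟨γ₀, hγ⟩ := ih hmem
      exact ⟨γ₀, by simp [hγ]⟩
    | step r h hr hi ih2 => exact ⟨γ ++ [X], by simp⟩

/-- Shifting the dot over several symbols. -/
lemma mem_nextStar_shift {s : LRState g} {A : Option g.NT}
    {α δ₂ δ₃ : List (Symbol T g.NT)} (h : (A, α, δ₂ ++ δ₃) ∈ s) :
    (A, α ++ δ₂, δ₃) ∈ nextStar g s δ₂ := by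
  induction δ₂ generalizing s α with
  | nil => simpa [nextStar_nil] using h
  | cons X δ₂' ih =>
    have := mem_next_base (β := δ₂' ++ δ₃) h
    have h2 := ih (s := next g s X) (α := α ++ [X]) this
    simpa [nextStar_cons] using h2

lemma next_empty_of_no_trigger {s : LRState g} {X : Symbol T g.NT}
    (h : ∀ A α β, (A, α, X :: β) ∈ s → False) : next g s X = ∅ := by
  ext d
  simp only [Set.mem_empty_iff_false, iff_false]
  intro hd
  induction hd with
  | base hb => obtain ⟨A, α, β, hmem, _⟩ := hb; exact h A α β hmem
  | step r hcl hr hi ih => exact ih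

end LRApprox
namespace LRApprox

variable {T : Type uT'} {g : ContextFreeGrammar.{uN'} T}

lemma tmap_no_nt {u : List T} {B : g.NT}
    (h : Symbol.nonterminal B ∈ (u.map Symbol.terminal : List (Symbol T g.NT))) : False := by
  simp at h

lemma tmap_append_nt_eq {v δ : List T} {B B'' : g.NT} {β : List (Symbol T g.NT)}
    (h : (v.map Symbol.terminal : List (Symbol T g.NT)) ++ Symbol.nonterminal B :: β
       = (δ.map Symbol.terminal) ++ [Symbol.nonterminal B'']) :
    v = δ ∧ B = B'' ∧ β = [] := by
  induction v generalizing δ with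
  | nil =>
    cases δ with
    | nil =>
      simp only [List.map_nil, List.nil_append, List.cons.injEq,
        Symbol.nonterminal.injEq] at h
      exact ⟨rfl, h.1, h.2⟩
    | cons d δ' => simp at h
  | cons x v' ih =>
    cases δ with
    | nil =>
      exfalso
      simp at h
    | cons d δ' =>
      simp only [List.map_cons, List.cons_append, List.cons.injEq,
        Symbol.terminal.injEq] at h
      obtain ⟨rfl, h2⟩ := h
      obtain ⟨rfl, rfl, rfl⟩ := ih h2
      exact ⟨rfl, rfl, rfl⟩

/-- The soundness property of an item in the state reached on terminal input `u`. -/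
def ItemOK (g : ContextFreeGrammar.{uN'} T) (u : List T) (d : DottedRule g) : Prop :=
  (u = [] ∧ d = (none, [], [Symbol.nonterminal g.initial])) ∨
  (∃ (A : g.NT) (v u' : List T),
    d.1 = some A ∧ d.2.1 = v.map Symbol.terminal ∧ u = u' ++ v ∧
    (∃ r ∈ g.rules, r.input = A ∧ r.output = d.2.1 ++ d.2.2) ∧
    g.Derives [Symbol.nonterminal g.initial]
      (u'.map Symbol.terminal ++ [Symbol.nonterminal A]))

/-- The prediction (closure) step preserves item soundness. -/
lemma itemOK_step (hg : RightLinear g) {u : List T} {B : g.NT} {r : ContextFreeRule T g.NT}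
    (hr : r ∈ g.rules) (hi : r.input = B) {A : Option g.NT} {α β : List (Symbol T g.NT)}
    (hp : ItemOK g u (A, α, Symbol.nonterminal B :: β)) :
    ItemOK g u (some B, [], r.output) := by
  rcases hp with ⟨rfl, haux⟩ | ⟨A', v, u', hA, hα, hu, ⟨r', hr', hi', hout'⟩, hder⟩
  · -- parent is the auxiliary start item
    simp only [Prod.mk.injEq, List.cons.injEq, Symbol.nonterminal.injEq] at haux
    obtain ⟨-, -, rfl, -⟩ := haux
    refine Or.inr ⟨g.initial, [], [], rfl, by simp, by simp, ⟨r, hr, hi, by simp⟩, by rfl⟩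
  · -- parent is a genuine item
    simp only at hA hα
    obtain rfl : A = some A' := hA
    subst hα hu hi'
    -- the parent's rule is right-linear; its output contains a nonterminal
    rcases hg r' hr' with ⟨δ, hδ⟩ | ⟨B'', δ, hδ⟩
    · exfalso
      refine tmap_no_nt (u := δ) (B := B) ?_
      rw [← hδ, hout']
      exact List.mem_append_right _ List.mem_cons_self
    · rw [hout'] at hδ
      obtain ⟨rfl, rfl, rfl⟩ := tmap_append_nt_eq hδ
      refine Or.inr ⟨B, [], u' ++ v, rfl, by simp, by simp, ⟨r, hr, hi, by simp⟩, ?_⟩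
      have hprod : g.Produces (u'.map Symbol.terminal ++ [Symbol.nonterminal r'.input])
          (u'.map Symbol.terminal ++ r'.output) := by
        refine ⟨r', hr', ?_⟩
        have := ContextFreeRule.rewrites_of_exists_parts r' (u'.map Symbol.terminal) []
        simpa using this
      have := Relation.ReflTransGen.tail hder hprod
      rw [hout'] at this
      simpa using this

/-- **Item soundness**: every item in a state reached on terminal input is `ItemOK`. -/
lemma item_sound (hg : RightLinear g) (u : List T) :
    ∀ {d : DottedRule g}, d ∈ nextStar g (start g) (u.map Symbol.terminal) →
      ItemOK g u d := by
  induction u using List.reverseRecOn with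
  | nil =>
    intro d hd
    induction hd with
    | base h => rw [Set.mem_singleton_iff] at h; exact Or.inl ⟨rfl, h⟩
    | step r h hr hi ih => exact itemOK_step hg hr hi ih
  | append_singleton u x ih =>
    intro d hd
    rw [List.map_append, List.map_cons, List.map_nil, nextStar_concat] at hd
    induction hd with
    | base h =>
      obtain ⟨A, α, β, hmem, rfl⟩ := h
      rcases ih hmem with ⟨rfl, haux⟩ | ⟨A', v, u', hA, hα, hu, ⟨r', hr', hi', hout'⟩, hder⟩
      · exfalso
        simp at haux
      · simp only at hA hα
        obtain rfl : A = some A' := hA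
        subst hα hu
        refine Or.inr ⟨A', v ++ [x], u', rfl, by simp, by simp, ⟨r', hr', hi', by simpa using hout'⟩, hder⟩
    | step r h hr hi ih2 => exact itemOK_step hg hr hi ih2

/-- The accepting item never occurs in a state reached on terminal input. -/
lemma finalDR_not_mem (hg : RightLinear g) (u : List T) :
    finalDR g ∉ nextStar g (start g) (u.map Symbol.terminal) := by
  intro h
  rcases item_sound hg u h with ⟨-, haux⟩ | ⟨A', v, u', hA, -, -, -, -⟩
  · simp [finalDR] at haux
  · exact absurd hA (by simp [finalDR])

end LRApprox
namespace LRApprox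

variable {T : Type uT'} {g : ContextFreeGrammar.{uN'} T}

/-- Every item of `s` is completed, with consumed part ending in a nonterminal. -/
def PostNT (s : LRState g) : Prop :=
  ∀ d ∈ s, ∃ (A : Option g.NT) (α : List (Symbol T g.NT)) (B : g.NT),
    d = (A, α ++ [Symbol.nonterminal B], ([] : List (Symbol T g.NT)))

lemma postNT_empty : PostNT (∅ : LRState g) := fun d hd => absurd hd (Set.notMem_empty d)

lemma postNT_next_empty {s : LRState g} (h : PostNT s) (X : Symbol T g.NT) :
    next g s X = ∅ := by
  apply next_empty_of_no_trigger
  intro A α β hmem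
  obtain ⟨A', α', B', hd⟩ := h _ hmem
  simp only [Prod.mk.injEq] at hd
  exact List.cons_ne_nil _ _ hd.2.2

/-- After shifting a nonterminal from a terminal-reached state, all items are completed. -/
lemma postNT_next_nt_of_terminal (hg : RightLinear g) (u : List T) (B : g.NT) :
    PostNT (next g (nextStar g (start g) (u.map Symbol.terminal)) (Symbol.nonterminal B)) := by
  intro d hd
  induction hd with
  | base hb =>
    obtain ⟨A, α, β, hmem, rfl⟩ := hb
    rcases item_sound hg u hmem with ⟨-, haux⟩ | ⟨A', v, u', hA, hα, -, ⟨r', hr', hi', hout'⟩, -⟩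
    · simp only [Prod.mk.injEq, List.cons.injEq, Symbol.nonterminal.injEq] at haux
      obtain ⟨rfl, rfl, rfl, rfl⟩ := haux
      exact ⟨none, [], g.initial, rfl⟩
    · simp only at hA hα
      obtain rfl : A = some A' := hA
      subst hα
      rcases hg r' hr' with ⟨δ, hδ⟩ | ⟨B'', δ, hδ⟩
      · exfalso
        refine tmap_no_nt (u := δ) (B := B) ?_
        rw [← hδ, hout']
        exact List.mem_append_right _ List.mem_cons_self
      · rw [hout'] at hδ
        obtain ⟨rfl, rfl, rfl⟩ := tmap_append_nt_eq hδ
        exact ⟨some A', v.map Symbol.terminal, B, rfl⟩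
  | step r h hr hi ih =>
    obtain ⟨A', α', B', hd⟩ := ih
    simp only [Prod.mk.injEq] at hd
    exact absurd hd.2.2 (List.cons_ne_nil _ _)

/-- Every reachable state is terminal-reached or a dead (all-completed) state. -/
lemma terminal_or_postNT (hg : RightLinear g) (γ : List (Symbol T g.NT)) :
    (∃ u : List T, γ = u.map Symbol.terminal) ∨ PostNT (nextStar g (start g) γ) := by
  induction γ using List.reverseRecOn with
  | nil => exact Or.inl ⟨[], rfl⟩
  | append_singleton γ X ih =>
    rcases ih with ⟨u, rfl⟩ | hPost
    · cases X with
      | terminal x => exact Or.inl ⟨u ++ [x], by simp⟩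
      | nonterminal B =>
        rw [nextStar_concat]
        exact Or.inr (postNT_next_nt_of_terminal hg u B)
    · rw [nextStar_concat, postNT_next_empty hPost]
      exact Or.inr postNT_empty

/-- Shifting a nonterminal from any reachable state gives an all-completed state. -/
lemma postNT_next_nt (hg : RightLinear g) (γ : List (Symbol T g.NT)) (B : g.NT) :
    PostNT (next g (nextStar g (start g) γ) (Symbol.nonterminal B)) := by
  rcases terminal_or_postNT hg γ with ⟨u, rfl⟩ | hPost
  · exact postNT_next_nt_of_terminal hg u B
  · rw [postNT_next_empty hPost]
    exact postNT_empty

end LRApprox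
namespace LRApprox

variable {T : Type uT'} {g : ContextFreeGrammar.{uN'} T}

/-! ### Collapse theory for stacks -/

/-- The target state of a stack entry. -/
def nxt (g : ContextFreeGrammar.{uN'} T) (a : LRState g × Symbol T g.NT) : LRState g :=
  next g a.1 a.2

/-- Validity of consecutive entries of a stack. -/
def Chn (g : ContextFreeGrammar.{uN'} T) (σ : Stack g) : Prop :=
  σ.IsChain (fun a b => nxt g a = b.1)

lemma isLoop_ne_nil {τ : Stack g} (h : IsLoop g τ) : τ ≠ [] := by
  obtain ⟨p, q, hp, -, -⟩ := h
  intro h0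
  rw [h0] at hp
  simp at hp

lemma isLoop_singleton {a : LRState g × Symbol T g.NT} (h : nxt g a = a.1) : IsLoop g [a] :=
  ⟨a, a, rfl, rfl, h⟩

lemma isLoop_append_singleton {l : Stack g} {a p : LRState g × Symbol T g.NT}
    (hp : (l ++ [a]).head? = some p) (h : nxt g a = p.1) : IsLoop g (l ++ [a]) :=
  ⟨p, a, hp, by simp, h⟩

lemma isLoop_cons_append {c b : LRState g × Symbol T g.NT} {l : Stack g}
    (h : nxt g b = c.1) : IsLoop g (c :: l ++ [b]) :=
  ⟨c, b, rfl, by rw [List.getLast?_concat], h⟩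

/-- No contiguous segment of `σ` is a loop. -/
def SegLoopFree (g : ContextFreeGrammar.{uN'} T) (σ : Stack g) : Prop :=
  ∀ ρ τ υ : Stack g, σ = ρ ++ τ ++ υ → ¬IsLoop g τ

lemma segLoopFree_iff_not_collapsible {σ : Stack g} :
    SegLoopFree g σ ↔ ¬Collapsible g σ := by
  unfold SegLoopFree Collapsible
  push_neg
  rfl

lemma segLoopFree_nil : SegLoopFree g [] := by
  intro ρ τ υ h hloop
  have hne := isLoop_ne_nil hloop
  have h' := h.symm
  rw [List.append_eq_nil_iff, List.append_eq_nil_iff] at h'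
  exact hne h'.1.2

lemma SegLoopFree.prefix {σ σ' : Stack g} (h : SegLoopFree g σ) (hp : σ' <+: σ) :
    SegLoopFree g σ' := by
  obtain ⟨rest, rfl⟩ := hp
  intro ρ τ υ heq
  exact h ρ τ (υ ++ rest) (by rw [heq]; simp)

/-- Splitting off the last element from an append. -/
lemma snoc_eq_append {π ρ υ : Stack g} {a : LRState g × Symbol T g.NT}
    (h : π ++ [a] = ρ ++ υ) (hυ : υ ≠ []) :
    ∃ υ', υ = υ' ++ [a] ∧ π = ρ ++ υ' := by
  have hlast : υ.getLast? = some a := by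
    have h2 := congrArg List.getLast? h
    rw [List.getLast?_append_of_ne_nil ρ hυ] at h2
    rw [← h2]
    simp
  refine ⟨υ.dropLast, ?_, ?_⟩
  · conv_lhs => rw [← List.dropLast_append_getLast hυ]
    rw [List.getLast?_eq_getLast hυ] at hlast
    rw [Option.some_inj] at hlast
    rw [hlast]
  · have h3 : π ++ [a] = (ρ ++ υ.dropLast) ++ [a] := by
      rw [h]
      conv_lhs => rw [← List.dropLast_append_getLast hυ]
      rw [List.getLast?_eq_getLast hυ] at hlast
      rw [Option.some_inj] at hlast
      rw [hlast, List.append_assoc]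
    exact List.append_cancel_right h3

open Classical in
/-- One step of the incremental normal-form computation. -/
noncomputable def inc (π : Stack g) (a : LRState g × Symbol T g.NT) : Stack g :=
  if nxt g a = a.1 then π
  else if ∀ c ∈ π, c.1 ≠ nxt g a then π ++ [a]
  else π.takeWhile (fun c => @decide (c.1 ≠ nxt g a) (Classical.propDecidable _))

/-- The incremental normal form of a stack. -/
noncomputable def incNF (σ : Stack g) : Stack g := σ.foldl inc []

lemma incNF_concat (σ : Stack g) (a : LRState g × Symbol T g.NT) :
    incNF (σ ++ [a]) = inc (incNF σ) a :=
  List.foldl_concat _ _ _ _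

/-- `inc` preserves loop-freeness. -/
lemma SegLoopFree.inc {π : Stack g} (h : SegLoopFree g π) (a : LRState g × Symbol T g.NT) :
    SegLoopFree g (inc π a) := by
  unfold LRApprox.inc
  split
  · exact h
  · rename_i hself
    split
    · rename_i hall
      intro ρ τ υ heq hloop
      rcases eq_or_ne υ [] with rfl | hυ
      · -- the loop is a suffix of π ++ [a]
        rw [List.append_nil] at heq
        obtain ⟨τ', rfl, hπ⟩ := snoc_eq_append heq (isLoop_ne_nil hloop)
        obtain ⟨p, q, hp, hq, hpq⟩ := hloop
        have hq' : q = a := by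
          rw [List.getLast?_append_of_ne_nil τ' (by simp : ([a] : Stack g) ≠ [])] at hq
          symm; simpa using hq
        subst hq'
        rcases eq_or_ne τ' [] with rfl | hτ'
        · simp at hp
          rw [← hp] at hpq
          exact hself hpq
        · rw [List.head?_append_of_ne_nil τ' hτ'] at hp
          have hpmem : p ∈ π := by
            rw [hπ]
            exact List.mem_append_right _ (List.mem_of_mem_head? hp)
          exact hall p hpmem (hpq ▸ rfl)
      · obtain ⟨υ', rfl, hπ⟩ := snoc_eq_append (by rw [heq, List.append_assoc]) hυ
        exact h ρ τ υ' (by rw [hπ, List.append_assoc]) hloop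
    · exact h.prefix (List.takeWhile_prefix _)

lemma segLoopFree_incNF (σ : Stack g) : SegLoopFree g (incNF σ) := by
  unfold incNF
  induction σ using List.reverseRecOn with
  | nil => exact segLoopFree_nil
  | append_singleton σ a ih =>
    rw [List.foldl_concat]
    exact ih.inc a

/-- On a loop-free extension, `inc` just appends. -/
lemma foldl_inc_of_segLoopFree {π σ : Stack g} (h : SegLoopFree g (π ++ σ)) :
    List.foldl inc π σ = π ++ σ := by
  induction σ generalizing π with
  | nil => simp
  | cons b σ' ih =>
    have hself : ¬(nxt g b = b.1) := by
      intro hb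
      exact h π [b] σ' (by simp) (isLoop_singleton hb)
    have hall : ∀ c ∈ π, c.1 ≠ nxt g b := by
      intro c hc hcb
      obtain ⟨π₁, π₂, rfl⟩ := List.append_of_mem hc
      exact h π₁ (c :: π₂ ++ [b]) σ' (by simp) (isLoop_cons_append hcb.symm)
    have : inc π b = π ++ [b] := by
      unfold LRApprox.inc
      rw [if_neg hself, if_pos hall]
    rw [List.foldl_cons, this, ih (by simpa using h)]
    simp

end LRApprox
namespace LRApprox

variable {T : Type uT'} {g : ContextFreeGrammar.{uN'} T}

lemma takeWhile_append_all {f : (LRState g × Symbol T g.NT) → Bool} {ρ ξ : Stack g}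
    (h : ∀ c ∈ ρ, f c = true) : (ρ ++ ξ).takeWhile f = ρ ++ ξ.takeWhile f := by
  induction ρ with
  | nil => simp
  | cons c ρ' ih =>
    rw [List.cons_append, List.takeWhile_cons_of_pos (h c List.mem_cons_self),
      ih (fun d hd => h d (List.mem_cons_of_mem _ hd))]
    rfl

/-- Processing an (earliest, minimal) loop by `inc` returns to the same stack. -/
lemma foldl_inc_loop {ρ τ : Stack g} (hch : Chn g (ρ ++ τ)) (hmin : IsMinimalLoop g τ)
    (hearly : ∀ ρ' τ' υ' : Stack g,
      ρ ++ τ = ρ' ++ τ' ++ υ' → ρ'.length < ρ.length → ¬IsLoop g τ') :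
    List.foldl inc ρ τ = ρ := by
  obtain ⟨⟨p, q, hp, hq, hpq⟩, hminimal⟩ := hmin
  -- no element of ρ can close a loop ending inside τ
  have hρno : ∀ (τ₁ τ₂ : Stack g) (a : LRState g × Symbol T g.NT),
      τ = τ₁ ++ a :: τ₂ → ∀ c ∈ ρ, c.1 ≠ nxt g a := by
    rintro τ₁ τ₂ a heq c hc hceq
    obtain ⟨ρ₁, ρ₂, rfl⟩ := List.append_of_mem hc
    refine hearly ρ₁ ((c :: (ρ₂ ++ τ₁)) ++ [a]) τ₂ ?_ (by simp) ?_
    · rw [heq]; simp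
    · exact isLoop_cons_append hceq.symm
  -- no proper prefix of τ is a loop
  have hpre : ∀ (τ₁ τ₂ : Stack g) (a : LRState g × Symbol T g.NT),
      τ = τ₁ ++ a :: τ₂ → τ₂ ≠ [] → ¬IsLoop g (τ₁ ++ [a]) := by
    rintro τ₁ τ₂ a heq hτ₂ hloop
    refine hminimal (τ₁ ++ [a]) ⟨τ₂, by rw [heq]; simp⟩ ?_ hloop
    intro heq2
    have hlen := congrArg List.length (heq2.trans heq)
    simp at hlen
    first
    | exact hτ₂ hlen
    | exact hτ₂ (List.eq_nil_of_length_eq_zero (by omega))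
  -- chain adjacency inside ρ ++ τ
  have hadj : ∀ (τ₁ τ₂ : Stack g) (a : LRState g × Symbol T g.NT),
      τ = τ₁ ++ a :: τ₂ → τ₁ ≠ [] → ∀ b ∈ τ₁.getLast?, nxt g b = a.1 := by
    rintro τ₁ τ₂ a heq hτ₁ b hb
    have hch' : List.IsChain (fun a b => nxt g a = b.1) ((ρ ++ τ₁) ++ a :: τ₂) := by
      rw [heq] at hch
      simpa [Chn, List.append_assoc] using hch
    rw [List.isChain_append] at hch'
    refine hch'.2.2 b ?_ a rfl
    rw [List.getLast?_append_of_ne_nil ρ hτ₁]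
    exact hb
  have main : ∀ (τ₂ τ₁ ξ : Stack g), τ = τ₁ ++ τ₂ → τ₂ ≠ [] →
      ((τ₁ = [] ∧ ξ = []) ∨ (τ₁ ≠ [] ∧ ξ.head? = some p)) →
      List.foldl inc (ρ ++ ξ) τ₂ = ρ := by
    intro τ₂
    induction τ₂ with
    | nil => intro τ₁ ξ _ hne _; exact absurd rfl hne
    | cons a τ₂' ih =>
      intro τ₁ ξ heq hne hinv
      rcases eq_or_ne τ₂' [] with rfl | hτ₂'
      · -- ENDGAME : a is the last element of τ
        have hqa : q = a := by
          rw [heq, List.getLast?_concat] at hq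
          exact (Option.some_inj.mp hq).symm
        have hnxa : nxt g a = p.1 := by rw [← hqa]; exact hpq
        rcases hinv with ⟨rfl, rfl⟩ | ⟨hτ₁, hξp⟩
        · have hpa : a = p := by
            rw [heq] at hp
            simpa using hp
          show List.foldl inc (ρ ++ []) [a] = ρ
          rw [List.append_nil, List.foldl_cons, List.foldl_nil]
          unfold inc
          rw [if_pos (by rw [hnxa, ← hpa])]
        · obtain ⟨ξ'', rfl⟩ : ∃ ξ'', ξ = p :: ξ'' := by
            cases ξ with
            | nil => exact absurd hξp (by simp)
            | cons c₀ ξ'' => exact ⟨ξ'', by rw [show c₀ = p by simpa using hξp]⟩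
          have hself : ¬(nxt g a = a.1) := by
            intro hs
            have hgl : τ₁.getLast? = some (τ₁.getLast hτ₁) := List.getLast?_eq_getLast hτ₁
            have hba : nxt g (τ₁.getLast hτ₁) = a.1 := hadj τ₁ [] a heq hτ₁ _ hgl
            refine hminimal τ₁ ⟨[a], by rw [heq]⟩ ?_ ?_
            · intro h2
              rw [← h2] at heq
              have := congrArg List.length heq
              simp at this
            · refine ⟨p, τ₁.getLast hτ₁, ?_, hgl, by rw [show next g (τ₁.getLast hτ₁).1 (τ₁.getLast hτ₁).2 = nxt g (τ₁.getLast hτ₁) from rfl, hba, ← hs, hnxa]⟩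
              rw [heq, List.head?_append_of_ne_nil τ₁ hτ₁] at hp
              exact hp
          rw [List.foldl_cons, List.foldl_nil]
          unfold inc
          rw [if_neg hself, if_neg ?hno]
          case hno =>
            intro hall
            exact hall p (List.mem_append_right _ List.mem_cons_self) hnxa.symm
          rw [takeWhile_append_all ?hρ]
          case hρ =>
            intro c hc
            simp only [decide_eq_true_eq]
            exact hρno τ₁ [] a heq c hc
          rw [List.takeWhile_cons_of_neg ?hp0, List.append_nil]
          case hp0 =>
            simp only [decide_eq_true_eq]
            push_neg
            exact hnxa.symm
      · -- MIDDLE of the loop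
        rw [List.foldl_cons]
        by_cases hself : nxt g a = a.1
        · -- inner self-loop: stack unchanged
          rcases hinv with ⟨rfl, rfl⟩ | ⟨hτ₁, hξp⟩
          · exact absurd (by simpa using isLoop_singleton hself)
              (hpre [] τ₂' a (by simpa using heq) hτ₂')
          · have hstep : inc (ρ ++ ξ) a = ρ ++ ξ := by unfold inc; rw [if_pos hself]
            rw [hstep]
            exact ih (τ₁ ++ [a]) ξ (by rw [heq]; simp) hτ₂' (Or.inr ⟨by simp, hξp⟩)
        · by_cases hall : ∀ c ∈ ρ ++ ξ, c.1 ≠ nxt g a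
          · -- append
            have hstep : inc (ρ ++ ξ) a = ρ ++ (ξ ++ [a]) := by
              unfold inc
              rw [if_neg hself, if_pos hall, List.append_assoc]
            rw [hstep]
            refine ih (τ₁ ++ [a]) (ξ ++ [a]) (by rw [heq]; simp) hτ₂' (Or.inr ⟨by simp, ?_⟩)
            rcases hinv with ⟨rfl, rfl⟩ | ⟨hτ₁, hξp⟩
            · have hpa : a = p := by
                rw [heq] at hp
                simpa using hp
              simp [hpa]
            · rw [List.head?_append_of_ne_nil ξ
                (by intro h0; rw [h0] at hξp; simp at hξp)]
              exact hξp
          · -- truncate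
            push_neg at hall
            obtain ⟨c, hcmem, hceq⟩ := hall
            rcases List.mem_append.mp hcmem with hcρ | hcξ
            · exact absurd hceq (hρno τ₁ τ₂' a heq c hcρ)
            · rcases hinv with ⟨rfl, rfl⟩ | ⟨hτ₁, hξp⟩
              · exact absurd hcξ (fun h => List.not_mem_nil h)
              · obtain ⟨ξ'', rfl⟩ : ∃ ξ'', ξ = p :: ξ'' := by
                  cases ξ with
                  | nil => exact absurd hξp (by simp)
                  | cons c₀ ξ'' => exact ⟨ξ'', by rw [show c₀ = p by simpa using hξp]⟩
                by_cases hph : p.1 = nxt g a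
                · refine absurd ?_ (hpre τ₁ τ₂' a heq hτ₂')
                  refine isLoop_append_singleton (p := p) ?_ hph.symm
                  rw [List.head?_append_of_ne_nil τ₁ hτ₁]
                  rw [heq, List.head?_append_of_ne_nil τ₁ hτ₁] at hp
                  exact hp
                · have hstep : inc (ρ ++ p :: ξ'') a
                      = ρ ++ (p :: List.takeWhile
                          (fun c => @decide (c.1 ≠ nxt g a) (Classical.propDecidable _)) ξ'') := by
                    unfold inc
                    rw [if_neg hself, if_neg (by push_neg; exact ⟨c, hcmem, hceq⟩)]
                    rw [takeWhile_append_all ?hρ2]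
                    case hρ2 =>
                      intro d hd
                      simp only [decide_eq_true_eq]
                      exact hρno τ₁ τ₂' a heq d hd
                    rw [List.takeWhile_cons_of_pos (by simp only [decide_eq_true_eq]; exact hph)]
                  rw [hstep]
                  exact ih (τ₁ ++ [a]) _ (by rw [heq]; simp) hτ₂' (Or.inr ⟨by simp, rfl⟩)
  have hfin := main τ [] [] (by simp) (isLoop_ne_nil ⟨p, q, hp, hq, hpq⟩) (Or.inl ⟨rfl, rfl⟩)
  simpa using hfin

end LRApprox
namespace LRApprox

variable {T : Type uT'} {g : ContextFreeGrammar.{uN'} T}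

lemma collapsible_of_step {σ σ' : Stack g} (h : ImmediatelyCollapses g σ σ') :
    Collapsible g σ := by
  obtain ⟨ρ, τ, υ, heq, -, hmin, -⟩ := h
  exact ⟨ρ, τ, υ, heq, hmin.1⟩

lemma exists_step_of_collapsible {σ : Stack g} (h : Collapsible g σ) :
    ∃ σ', ImmediatelyCollapses g σ σ' ∧ σ'.length < σ.length := by
  classical
  obtain ⟨ρ0, τ0, υ0, heq0, hl0⟩ := h
  have hP : ∃ n, ∃ τ υ : Stack g, σ = σ.take n ++ τ ++ υ ∧ IsLoop g τ :=
    ⟨ρ0.length, τ0, υ0, by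
      rw [show σ.take ρ0.length = ρ0 from by rw [heq0, List.append_assoc, List.take_left]]
      exact heq0, hl0⟩
  obtain ⟨τ1, υ1, heq1, hl1⟩ := Nat.find_spec hP
  set i := Nat.find hP with hi
  set ρ : Stack g := σ.take i with hρdef
  have hQ : ∃ m, IsLoop g ((τ1 ++ υ1).take m) := ⟨τ1.length, by rw [List.take_left]; exact hl1⟩
  obtain hl2 := Nat.find_spec hQ
  set j := Nat.find hQ with hj
  set τ : Stack g := (τ1 ++ υ1).take j with hτdef
  set υ : Stack g := (τ1 ++ υ1).drop j with hυdef
  have hjle : j ≤ (τ1 ++ υ1).length := by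
    calc j ≤ τ1.length := Nat.find_min' hQ (by rw [List.take_left]; exact hl1)
    _ ≤ (τ1 ++ υ1).length := by simp
  have hτlen : τ.length = j := by rw [hτdef, List.length_take]; omega
  have heqσ : σ = ρ ++ τ ++ υ := by
    rw [List.append_assoc, hτdef, hυdef, List.take_append_drop]
    exact heq1.trans (List.append_assoc ρ τ1 υ1)
  refine ⟨ρ ++ υ, ⟨ρ, τ, υ, heqσ, rfl, ⟨hl2, ?_⟩, ?_⟩, ?_⟩
  · -- minimality of τ
    intro τ' hpre hne hloop
    have h1 : τ' <+: (τ1 ++ υ1) ∧ τ'.length ≤ j := List.prefix_take_iff.mp hpre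
    have h2 : τ' = (τ1 ++ υ1).take τ'.length := List.prefix_iff_eq_take.mp h1.1
    have hlt : τ'.length < j := by
      rcases Nat.lt_or_ge τ'.length j with h | h
      · exact h
      · exfalso
        apply hne
        apply List.IsPrefix.eq_of_length hpre
        omega
    exact Nat.find_min hQ hlt (h2 ▸ hloop)
  · -- ρ is earliest
    rintro ⟨ρ', τ', υ', heq', hpre', hne', hloop'⟩
    have hρlen : ρ.length ≤ i := by rw [hρdef, List.length_take]; omega
    have hlt : ρ'.length < ρ.length := by
      rcases Nat.lt_or_ge ρ'.length ρ.length with h | h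
      · exact h
      · exfalso
        apply hne'
        apply List.IsPrefix.eq_of_length hpre'
        have := hpre'.length_le
        omega
    have hρ'take : σ.take ρ'.length = ρ' := by
      have : ρ' <+: σ := hpre'.trans (hρdef ▸ List.take_prefix i σ)
      exact (List.prefix_iff_eq_take.mp this).symm
    refine Nat.find_min hP (m := ρ'.length) (by omega) ⟨τ', υ', ?_, hloop'⟩
    rw [hρ'take]
    exact heq'
  · -- length decreases
    have hτne : τ ≠ [] := isLoop_ne_nil hl2
    have := congrArg List.length heqσ
    simp only [List.length_append] at this
    have hτpos : 0 < τ.length := List.length_pos_iff.mpr hτne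
    simp only [List.length_append]
    omega

lemma immediatelyCollapses_det {σ σ₁ σ₂ : Stack g}
    (h1 : ImmediatelyCollapses g σ σ₁) (h2 : ImmediatelyCollapses g σ σ₂) : σ₁ = σ₂ := by
  obtain ⟨ρ₁, τ₁, υ₁, e1, rfl, m1, n1⟩ := h1
  obtain ⟨ρ₂, τ₂, υ₂, e2, rfl, m2, n2⟩ := h2
  have hρ : ρ₁ = ρ₂ := by
    have p1 : ρ₁ <+: σ := ⟨τ₁ ++ υ₁, by rw [e1, List.append_assoc]⟩
    have p2 : ρ₂ <+: σ := ⟨τ₂ ++ υ₂, by rw [e2, List.append_assoc]⟩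
    rcases List.prefix_or_prefix_of_prefix p1 p2 with h | h
    · rcases eq_or_ne ρ₁ ρ₂ with he | hne
      · exact he
      · exact absurd ⟨ρ₁, τ₁, υ₁, e1, h, hne, m1.1⟩ n2
    · rcases eq_or_ne ρ₂ ρ₁ with he | hne
      · exact he.symm
      · exact absurd ⟨ρ₂, τ₂, υ₂, e2, h, hne, m2.1⟩ n1
  subst hρ
  have hrest : τ₁ ++ υ₁ = τ₂ ++ υ₂ := by
    apply List.append_cancel_left (as := ρ₁)
    rw [← List.append_assoc, ← List.append_assoc, ← e1, ← e2]
  have hτ : τ₁ = τ₂ := by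
    have p1 : τ₁ <+: τ₁ ++ υ₁ := ⟨υ₁, rfl⟩
    have p2 : τ₂ <+: τ₁ ++ υ₁ := ⟨υ₂, hrest.symm⟩
    rcases List.prefix_or_prefix_of_prefix p1 p2 with h | h
    · rcases eq_or_ne τ₁ τ₂ with he | hne
      · exact he
      · exact absurd m1.1 (m2.2 τ₁ h hne)
    · rcases eq_or_ne τ₂ τ₁ with he | hne
      · exact he.symm
      · exact absurd m2.1 (m1.2 τ₂ h hne)
  subst hτ
  have : υ₁ = υ₂ := List.append_cancel_left hrest
  rw [this]

lemma nf_unique {σ τ₁ τ₂ : Stack g} (h1 : Collapses g σ τ₁) (n1 : ¬Collapsible g τ₁)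
    (h2 : Collapses g σ τ₂) (n2 : ¬Collapsible g τ₂) : τ₁ = τ₂ := by
  revert h2
  induction h1 using Relation.ReflTransGen.head_induction_on with
  | refl =>
    intro h2
    rcases Relation.ReflTransGen.cases_head h2 with rfl | ⟨x, hstep, -⟩
    · rfl
    · exact absurd (collapsible_of_step hstep) n1
  | head hstep htail ih =>
    intro h2
    rcases Relation.ReflTransGen.cases_head h2 with rfl | ⟨x, hstep2, htail2⟩
    · exact absurd (collapsible_of_step hstep) n2
    · have hcx := immediatelyCollapses_det hstep hstep2
      subst hcx
      exact ih htail2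

lemma chn_collapse {σ σ' : Stack g} (h : ImmediatelyCollapses g σ σ') (hch : Chn g σ) :
    Chn g σ' := by
  obtain ⟨ρ, τ, υ, rfl, rfl, hmin, -⟩ := h
  rw [Chn, List.append_assoc, List.isChain_append] at hch
  obtain ⟨hρ, hτυ, hseam1⟩ := hch
  rw [List.isChain_append] at hτυ
  obtain ⟨hτ, hυ, hseam2⟩ := hτυ
  rw [Chn, List.isChain_append]
  refine ⟨hρ, hυ, ?_⟩
  intro x hx y hy
  obtain ⟨p, q, hp, hq, hpq⟩ := hmin.1
  have h1 : nxt g x = p.1 := by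
    refine hseam1 x hx p ?_
    rw [List.head?_append_of_ne_nil τ (isLoop_ne_nil hmin.1)]
    exact hp
  have h2 : nxt g q = y.1 := hseam2 q hq y hy
  rw [h1, ← hpq]
  exact h2

lemma incNF_step_eq {σ σ' : Stack g} (h : ImmediatelyCollapses g σ σ') (hch : Chn g σ) :
    incNF σ = incNF σ' := by
  obtain ⟨ρ, τ, υ, rfl, rfl, hmin, hno⟩ := h
  have hρfree : SegLoopFree g ρ := by
    intro ρ₁ τ' ρ₂ heq hloop
    refine hno ⟨ρ₁, τ', ρ₂ ++ τ ++ υ, by rw [heq]; simp, ⟨τ' ++ ρ₂, by rw [heq]; simp⟩, ?_, hloop⟩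
    intro h2
    rw [← h2] at heq
    have := congrArg List.length heq
    simp only [List.length_append] at this
    have := List.length_pos_iff.mpr (isLoop_ne_nil hloop)
    omega
  have hearly : ∀ ρ' τ' υ'' : Stack g,
      ρ ++ τ = ρ' ++ τ' ++ υ'' → ρ'.length < ρ.length → ¬IsLoop g τ' := by
    intro ρ' τ' υ'' heq hlt hloop
    refine hno ⟨ρ', τ', υ'' ++ υ, by rw [← List.append_assoc, heq], ?_, ?_, hloop⟩
    · have hp1 : ρ' <+: ρ ++ τ := ⟨τ' ++ υ'', by rw [heq, List.append_assoc]⟩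
      have hp2 : ρ' <+: (ρ ++ τ).take ρ.length := by
        rw [List.prefix_take_iff]
        exact ⟨hp1, le_of_lt hlt⟩
      rwa [List.take_left] at hp2
    · intro h2
      rw [h2] at hlt
      exact lt_irrefl _ hlt
  have hchρτ : Chn g (ρ ++ τ) := hch.prefix ⟨υ, rfl⟩
  have e1 : List.foldl inc ([] : Stack g) ρ = ρ := by
    simpa using foldl_inc_of_segLoopFree (π := []) (σ := ρ) (by simpa using hρfree)
  have e2 : List.foldl inc ρ τ = ρ := foldl_inc_loop hchρτ hmin hearly
  have L : incNF (ρ ++ τ ++ υ) = List.foldl inc ρ υ := by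
    unfold incNF
    rw [List.foldl_append, List.foldl_append, e1, e2]
  have R : incNF (ρ ++ υ) = List.foldl inc ρ υ := by
    unfold incNF
    rw [List.foldl_append, e1]
  rw [L, R]

lemma not_collapsible_incNF (σ : Stack g) : ¬Collapsible g (incNF σ) :=
  segLoopFree_iff_not_collapsible.mp (segLoopFree_incNF σ)

lemma incNF_eq_self_of_not_collapsible {σ : Stack g} (h : ¬Collapsible g σ) : incNF σ = σ := by
  have := foldl_inc_of_segLoopFree (π := []) (σ := σ)
    (by simpa using segLoopFree_iff_not_collapsible.mpr h)
  simpa [incNF] using this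

lemma collapses_incNF_aux : ∀ (n : ℕ) (σ : Stack g), σ.length ≤ n → Chn g σ →
    Collapses g σ (incNF σ) := by
  intro n
  induction n with
  | zero =>
    intro σ hlen _
    have hσ : σ = [] := List.eq_nil_of_length_eq_zero (Nat.le_zero.mp hlen)
    subst hσ
    rw [show incNF ([] : Stack g) = [] from rfl]
    exact Relation.ReflTransGen.refl
  | succ n ih =>
    intro σ hlen hch
    by_cases hc : Collapsible g σ
    · obtain ⟨σ', hstep, hlt⟩ := exists_step_of_collapsible hc
      rw [incNF_step_eq hstep hch]
      exact Relation.ReflTransGen.head hstep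
        (ih σ' (by omega) (chn_collapse hstep hch))
    · rw [incNF_eq_self_of_not_collapsible hc]
      exact Relation.ReflTransGen.refl

lemma collapses_incNF {σ : Stack g} (hch : Chn g σ) : Collapses g σ (incNF σ) :=
  collapses_incNF_aux σ.length σ le_rfl hch

/-! ### The collapsing congruence -/

lemma stacks_chn_last {s : LRState g} {σ : Stack g} (h : Stacks g s σ) :
    Chn g σ ∧ ((σ = [] ∧ s = start g) ∨ ∃ x, σ.getLast? = some x ∧ nxt g x = s) := by
  induction h with
  | nil => exact ⟨List.isChain_nil, Or.inl ⟨rfl, rfl⟩⟩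
  | @snoc q σ X hσ hne ih =>
    obtain ⟨hch, hlast⟩ := ih
    constructor
    · rw [Chn, List.isChain_append]
      refine ⟨hch, List.isChain_singleton _, ?_⟩
      intro x hx y hy
      obtain rfl : (q, X) = y := by simpa using hy
      rcases hlast with ⟨rfl, -⟩ | ⟨x', hx', hnx⟩
      · simp at hx
      · rw [hx'] at hx
        obtain rfl := Option.some_inj.mp hx
        exact hnx
    · exact Or.inr ⟨(q, X), List.getLast?_concat, rfl⟩

lemma Stacks.chn {s : LRState g} {σ : Stack g} (h : Stacks g s σ) : Chn g σ :=
  (stacks_chn_last h).1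

lemma collEquiv_self {σ : Stack g} (hch : Chn g σ) : CollEquiv g σ σ :=
  ⟨incNF σ, not_collapsible_incNF σ, collapses_incNF hch, collapses_incNF hch⟩

lemma collCong_refl {s : LRState g} {σ : Stack g} (h : Stacks g s σ) : CollCong g s σ σ :=
  ⟨h, h, collEquiv_self h.chn⟩

lemma collEquiv_incNF_eq {σ σ' : Stack g} (hch : Chn g σ) (hch' : Chn g σ')
    (h : CollEquiv g σ σ') : incNF σ = incNF σ' := by
  obtain ⟨τ, hτ, hσ, hσ'⟩ := h
  have e1 : τ = incNF σ := nf_unique hσ hτ (collapses_incNF hch) (not_collapsible_incNF σ)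
  have e2 : τ = incNF σ' := nf_unique hσ' hτ (collapses_incNF hch') (not_collapsible_incNF σ')
  rw [← e1, ← e2]

lemma collEquiv_of_incNF_eq {σ σ' : Stack g} (hch : Chn g σ) (hch' : Chn g σ')
    (h : incNF σ = incNF σ') : CollEquiv g σ σ' :=
  ⟨incNF σ, not_collapsible_incNF σ, collapses_incNF hch, h ▸ collapses_incNF hch'⟩

lemma collCong_symm {s : LRState g} {σ σ' : Stack g} (h : CollCong g s σ σ') :
    CollCong g s σ' σ := by
  obtain ⟨h1, h2, τ, hτ, hσ, hσ'⟩ := h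
  exact ⟨h2, h1, τ, hτ, hσ', hσ⟩

lemma collCong_trans {s : LRState g} {σ₁ σ₂ σ₃ : Stack g}
    (h : CollCong g s σ₁ σ₂) (h' : CollCong g s σ₂ σ₃) : CollCong g s σ₁ σ₃ := by
  obtain ⟨h1, h2, he⟩ := h
  obtain ⟨-, h3, he'⟩ := h'
  refine ⟨h1, h3, collEquiv_of_incNF_eq h1.chn h3.chn ?_⟩
  rw [collEquiv_incNF_eq h1.chn h2.chn he, collEquiv_incNF_eq h2.chn h3.chn he']

lemma collCong_push {s : LRState g} {σ σ' : Stack g} {X : Symbol T g.NT}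
    (hne : next g s X ≠ ∅) (h : CollCong g s σ σ') :
    CollCong g (next g s X) (σ ++ [(s, X)]) (σ' ++ [(s, X)]) := by
  obtain ⟨h1, h2, he⟩ := h
  have s1 : Stacks g (next g s X) (σ ++ [(s, X)]) := Stacks.snoc h1 hne
  have s2 : Stacks g (next g s X) (σ' ++ [(s, X)]) := Stacks.snoc h2 hne
  refine ⟨s1, s2, collEquiv_of_incNF_eq s1.chn s2.chn ?_⟩
  rw [incNF_concat, incNF_concat, collEquiv_incNF_eq h1.chn h2.chn he]

end LRApprox
namespace LRApprox

variable {T : Type uT'} {g : ContextFreeGrammar.{uN'} T}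

lemma uNextStar_concat (E : LRState g → Stack g → Stack g → Prop) (p : UState g)
    (γ : List (Symbol T g.NT)) (X : Symbol T g.NT) :
    uNextStar g E p (γ ++ [X]) = uNext g E (uNextStar g E p γ) X :=
  List.foldl_concat _ _ _ _

lemma uNextStar_append (E : LRState g → Stack g → Stack g → Prop) (p : UState g)
    (γ δ : List (Symbol T g.NT)) :
    uNextStar g E p (γ ++ δ) = uNextStar g E (uNextStar g E p γ) δ :=
  List.foldl_append

lemma uNextStar_fst (E : LRState g → Stack g → Stack g → Prop) :
    ∀ (γ : List (Symbol T g.NT)) (p : UState g),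
      (uNextStar g E p γ).1 = nextStar g p.1 γ := by
  intro γ
  induction γ with
  | nil => intro p; rfl
  | cons X γ ih =>
    intro p
    exact ih (uNext g E p X)

/-- The canonical form of the unfolded state reached along a genuine stack. -/
lemma uNextStar_stacks {s : LRState g} {σ : Stack g} (h : Stacks g s σ) :
    uNextStar g (CollCong g) (uStart g (CollCong g)) (σ.map Prod.snd)
      = (s, {τ | Stacks g s τ ∧ CollCong g s τ σ}) := by
  induction h with
  | nil => rfl
  | @snoc q σ X hσ hne ih =>
    rw [List.map_append]
    simp only [List.map_cons, List.map_nil]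
    rw [uNextStar_concat, ih]
    show (next g q X, _) = _
    refine Prod.ext rfl ?_
    show {τ | Stacks g (next g q X) τ ∧
      ∃ σ' ∈ {τ | Stacks g q τ ∧ CollCong g q τ σ},
        CollCong g (next g q X) τ (σ' ++ [(q, X)])} = _
    ext τ
    simp only [Set.mem_setOf_eq]
    constructor
    · rintro ⟨hτ, σ', ⟨hσ', hEσ'⟩, hEτ⟩
      exact ⟨hτ, collCong_trans hEτ (collCong_push hne hEσ')⟩
    · rintro ⟨hτ, hEτ⟩
      exact ⟨hτ, σ, ⟨hσ, collCong_refl hσ⟩, hEτ⟩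

lemma isUState_of_stacks {s : LRState g} {σ : Stack g} (h : Stacks g s σ) :
    IsUState g (CollCong g)
      (uNextStar g (CollCong g) (uStart g (CollCong g)) (σ.map Prod.snd)) := by
  rw [uNextStar_stacks h]
  exact ⟨σ, h, rfl⟩

lemma isUState_eq {p : UState g} (h : IsUState g (CollCong g) p) :
    ∃ σ : Stack g, Stacks g p.1 σ ∧
      p = uNextStar g (CollCong g) (uStart g (CollCong g)) (σ.map Prod.snd) := by
  obtain ⟨σ, hσ, hset⟩ := h
  refine ⟨σ, hσ, ?_⟩
  rw [uNextStar_stacks hσ, ← hset]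

end LRApprox
namespace LRApprox

variable {T : Type uT'} {g : ContextFreeGrammar.{uN'} T}

lemma popSet_postNT (hg : RightLinear g) {p p' : UState g}
    (h : p' ∈ PopSet g (CollCong g) p) : PostNT p'.1 := by
  obtain ⟨A, α, p'', hU, hcomp, hinit, hstar, hne, rfl⟩ := h
  obtain ⟨σ, hσ, rfl⟩ := isUState_eq hU
  show PostNT (next g (uNextStar g (CollCong g) (uStart g (CollCong g)) (σ.map Prod.snd)).1
    (Symbol.nonterminal A))
  rw [uNextStar_fst]
  exact postNT_next_nt hg _ A

lemma fpath_nil_of_postNT (hg : RightLinear g) {p : UState g} {v : List T} {q : UState g}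
    (hpath : FPath g (CollCong g) p v q) (hP : PostNT p.1) : v = [] := by
  induction hpath with
  | refl => rfl
  | shift hne hpath ih => exact absurd (postNT_next_empty hP _) hne
  | eps hpop hpath ih => exact ih (popSet_postNT hg hpop)

lemma fpath_sound (hg : RightLinear g) {p : UState g} {v : List T} {q : UState g}
    (hpath : FPath g (CollCong g) p v q) :
    IsFinal g q.1 →
    ∀ u : List T, p.1 = nextStar g (start g) (u.map Symbol.terminal) →
    g.Derives [Symbol.nonterminal g.initial] ((u ++ v).map Symbol.terminal) := by
  induction hpath with
  | refl =>
    intro hfin u hp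
    exact absurd (hp ▸ hfin) (finalDR_not_mem hg u)
  | @shift p x w q hne hpath ih =>
    intro hfin u hp
    have hstep : (uNext g (CollCong g) p (Symbol.terminal x)).1
        = nextStar g (start g) ((u ++ [x]).map Symbol.terminal) := by
      show next g p.1 (Symbol.terminal x) = _
      rw [hp, List.map_append]
      simp only [List.map_cons, List.map_nil]
      rw [nextStar_concat]
    have hder := ih hfin (u ++ [x]) hstep
    rw [List.append_assoc] at hder
    simpa using hder
  | @eps p p' w q hpop hpath ih =>
    intro hfin u hp
    have hw : w = [] := fpath_nil_of_postNT hg hpath (popSet_postNT hg hpop)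
    subst hw
    obtain ⟨A, α, p'', hU, hcomp, hinit, hstar, hne2, hp'⟩ := hpop
    rw [hp] at hcomp
    rcases item_sound hg u hcomp with ⟨-, haux⟩ | ⟨A', v', u', hA, hα, hu, ⟨r, hr, hri, hro⟩, hder⟩
    · simp at haux
    · simp only at hA hα hro
      obtain rfl : A = A' := Option.some_inj.mp hA
      have hprod : g.Produces (u'.map Symbol.terminal ++ [Symbol.nonterminal A])
          (u'.map Symbol.terminal ++ r.output) := by
        refine ⟨r, hr, ?_⟩
        rw [← hri]
        simpa using ContextFreeRule.rewrites_of_exists_parts r (u'.map Symbol.terminal) []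
      have hfin2 := Relation.ReflTransGen.tail hder hprod
      rw [hro, hα] at hfin2
      rw [List.append_nil, hu]
      simpa using hfin2

lemma faccepts_sound (hg : RightLinear g) {w : List T}
    (h : FAccepts g (CollCong g) w) : w ∈ g.language := by
  obtain ⟨q, hfin, hpath⟩ := h
  rw [ContextFreeGrammar.mem_language_iff]
  have := fpath_sound hg hpath hfin [] rfl
  simpa using this

end LRApprox
namespace LRApprox

variable {T : Type uT'} {g : ContextFreeGrammar.{uN'} T}

/-- Right-linear chain derivations: `S ⇒* u A`. -/
inductive RChain (g : ContextFreeGrammar.{uN'} T) : List T → g.NT → Prop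
  | base : RChain g [] g.initial
  | step {u : List T} {A B : g.NT} {β : List T} {r : ContextFreeRule T g.NT} :
      RChain g u A → r ∈ g.rules → r.input = A →
      r.output = β.map Symbol.terminal ++ [Symbol.nonterminal B] → RChain g (u ++ β) B

/-- Predicted items for chain-reachable nonterminals. -/
lemma rchain_pred {u : List T} {A : g.NT} (h : RChain g u A) :
    ∀ r ∈ g.rules, r.input = A → (some A, [], r.output) ∈
      nextStar g (start g) (u.map Symbol.terminal) := by
  induction h with
  | base =>
    intro r hr hri
    exact Closure.step r (Closure.base (Set.mem_singleton _)) hr hri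
  | @step u A B β r' hch hr' hri' hro' ih =>
    intro r hr hri
    have h1 : (some A, [], r'.output) ∈ nextStar g (start g) (u.map Symbol.terminal) :=
      ih r' hr' hri'
    rw [hro'] at h1
    have h2 := mem_nextStar_shift (δ₂ := β.map Symbol.terminal)
      (δ₃ := [Symbol.nonterminal B]) h1
    rw [← nextStar_append, ← List.map_append] at h2
    exact isCl_nextStar _ isCl_start _ h2 r hr hri

/-- Existence of a genuine stack along a word of symbols. -/
def GoodStk (g : ContextFreeGrammar.{uN'} T) (γ : List (Symbol T g.NT)) : Prop :=
  ∃ σ : Stack g, σ.map Prod.snd = γ ∧ Stacks g (nextStar g (start g) γ) σ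

lemma goodStk_nil : GoodStk g [] := ⟨[], rfl, Stacks.nil⟩

lemma goodStk_snoc {γ : List (Symbol T g.NT)} {X : Symbol T g.NT} (h : GoodStk g γ)
    (hne : next g (nextStar g (start g) γ) X ≠ ∅) : GoodStk g (γ ++ [X]) := by
  obtain ⟨σ, hmap, hσ⟩ := h
  refine ⟨σ ++ [(nextStar g (start g) γ, X)], by simp [hmap], ?_⟩
  rw [nextStar_concat]
  exact Stacks.snoc hσ hne

lemma goodStk_shift {δ : List (Symbol T g.NT)} :
    ∀ {γ : List (Symbol T g.NT)} {A : Option g.NT} {α rest : List (Symbol T g.NT)},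
    GoodStk g γ → (A, α, δ ++ rest) ∈ nextStar g (start g) γ → GoodStk g (γ ++ δ) := by
  induction δ with
  | nil => intro γ A α rest h _; simpa using h
  | cons X δ' ih =>
    intro γ A α rest h hitem
    have h1 : (A, α ++ [X], δ' ++ rest) ∈ next g (nextStar g (start g) γ) X :=
      mem_next_base hitem
    have hne := next_ne_empty_of_mem h1
    have h2 : GoodStk g (γ ++ [X]) := goodStk_snoc h hne
    rw [← nextStar_concat] at h1
    have h3 := ih h2 h1
    rwa [List.append_assoc] at h3
    
lemma rchain_goodStk {u : List T} {A : g.NT} (h : RChain g u A) :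
    GoodStk g (u.map Symbol.terminal) := by
  induction h with
  | base => exact goodStk_nil
  | @step u A B β r hch hr hri hro ih =>
    have hpred := rchain_pred hch r hr hri
    rw [hro] at hpred
    have := goodStk_shift ih hpred
    rwa [← List.map_append] at this

lemma rchain_ntshift {u : List T} {A : g.NT} (h : RChain g u A) :
    next g (nextStar g (start g) (u.map Symbol.terminal)) (Symbol.nonterminal A) ≠ ∅ := by
  induction h with
  | base =>
    refine next_ne_empty_of_mem (d := (none, [Symbol.nonterminal g.initial], [])) ?_
    exact mem_next_base (Closure.base (Set.mem_singleton _))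
  | @step u' A' B β r hch hr hri hro ih =>
    have hpred := rchain_pred hch r hr hri
    rw [hro] at hpred
    have h2 := mem_nextStar_shift (δ₂ := β.map Symbol.terminal)
      (δ₃ := [Symbol.nonterminal B]) hpred
    rw [← nextStar_append, ← List.map_append] at h2
    exact next_ne_empty_of_mem (mem_next_base h2)

end LRApprox
namespace LRApprox

variable {T : Type uT'} {g : ContextFreeGrammar.{uN'} T}

lemma FPath.trans {E : LRState g → Stack g → Stack g → Prop} {p q q' : UState g}
    {v₁ v₂ : List T} (h1 : FPath g E p v₁ q) (h2 : FPath g E q v₂ q') :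
    FPath g E p (v₁ ++ v₂) q' := by
  induction h1 with
  | refl => exact h2
  | shift hne hpath ih => exact FPath.shift hne (ih h2)
  | eps hpop hpath ih => exact FPath.eps hpop (ih h2)

/-- Shifting a terminal word guided by an item. -/
lemma fpath_shifts {β : List T} :
    ∀ {u : List T} {A : Option g.NT} {α rest : List (Symbol T g.NT)},
    (A, α, β.map Symbol.terminal ++ rest) ∈ nextStar g (start g) (u.map Symbol.terminal) →
    FPath g (CollCong g) (uNextStar g (CollCong g) (uStart g (CollCong g)) (u.map Symbol.terminal))
      β (uNextStar g (CollCong g) (uStart g (CollCong g)) ((u ++ β).map Symbol.terminal)) := by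
  induction β with
  | nil =>
    intro u A α rest _
    rw [List.append_nil]
    exact FPath.refl _
  | cons b β' ih =>
    intro u A α rest hitem
    have h1 : (A, α ++ [Symbol.terminal b], β'.map Symbol.terminal ++ rest)
        ∈ next g (nextStar g (start g) (u.map Symbol.terminal)) (Symbol.terminal b) :=
      mem_next_base hitem
    have hne : next g (uNextStar g (CollCong g) (uStart g (CollCong g))
        (u.map Symbol.terminal)).1 (Symbol.terminal b) ≠ ∅ := by
      rw [uNextStar_fst]
      exact next_ne_empty_of_mem h1
    refine FPath.shift hne ?_
    have heq : uNext g (CollCong g) (uNextStar g (CollCong g) (uStart g (CollCong g))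
        (u.map Symbol.terminal)) (Symbol.terminal b)
        = uNextStar g (CollCong g) (uStart g (CollCong g)) ((u ++ [b]).map Symbol.terminal) := by
      rw [← uNextStar_concat, List.map_append]
      rfl
    rw [heq]
    rw [← nextStar_concat, ← show ((u ++ [b]).map Symbol.terminal : List (Symbol T g.NT))
      = u.map Symbol.terminal ++ [Symbol.terminal b] by simp] at h1
    have h2 := ih h1
    rwa [List.append_assoc, List.singleton_append] at h2

/-- The chain of reductions after the input has been consumed. -/
lemma eps_chain {u : List T} {A : g.NT} (hchain : RChain g u A) :
    ∀ α : List (Symbol T g.NT),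
    (some A, [], α) ∈ nextStar g (start g) (u.map Symbol.terminal) →
    ∃ qf : UState g, IsFinal g qf.1 ∧
      FPath g (CollCong g)
        (uNextStar g (CollCong g) (uStart g (CollCong g)) (u.map Symbol.terminal ++ α)) [] qf := by
  induction hchain with
  | base =>
    intro α hα
    simp only [List.map_nil, List.nil_append] at hα ⊢
    refine ⟨uNext g (CollCong g) (uStart g (CollCong g)) (Symbol.nonterminal g.initial), ?_, ?_⟩
    · show finalDR g ∈ next g (start g) (Symbol.nonterminal g.initial)
      exact mem_next_base (Closure.base (Set.mem_singleton _))
    · refine FPath.eps ?_ (FPath.refl _)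
      refine ⟨g.initial, α, uStart g (CollCong g), ⟨[], Stacks.nil, rfl⟩, ?_, hα, rfl, ?_, rfl⟩
      · -- completed item in (uNextStar uStart α).1
        rw [uNextStar_fst]
        have := mem_nextStar_shift (δ₂ := α) (δ₃ := []) (α := [])
          (by rw [List.append_nil]; exact hα)
        simpa [uStart, nextStar_nil] using this
      · exact next_ne_empty_of_mem
          (mem_next_base (β := []) (Closure.base (Set.mem_singleton _)))
  | @step u' A' B β r hch hr hri hro ih =>
    intro α hα
    -- the source state of the reduction
    obtain ⟨σ, hmap, hσ⟩ := rchain_goodStk (RChain.step hch hr hri hro)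
    have hU : IsUState g (CollCong g)
        (uNextStar g (CollCong g) (uStart g (CollCong g)) ((u' ++ β).map Symbol.terminal)) := by
      have := isUState_of_stacks hσ
      rwa [hmap] at this
    have hcomp : (some B, α, ([] : List (Symbol T g.NT)))
        ∈ (uNextStar g (CollCong g) (uStart g (CollCong g))
            ((u' ++ β).map Symbol.terminal ++ α)).1 := by
      rw [uNextStar_fst, nextStar_append]
      have := mem_nextStar_shift (δ₂ := α) (δ₃ := []) (α := [])
        (by rw [List.append_nil]; exact hα)
      simpa [uStart] using this
    have hα' : (some B, ([] : List (Symbol T g.NT)), α)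
        ∈ (uNextStar g (CollCong g) (uStart g (CollCong g))
            ((u' ++ β).map Symbol.terminal)).1 := by
      rw [uNextStar_fst]
      exact hα
    have hne : next g (uNextStar g (CollCong g) (uStart g (CollCong g))
        ((u' ++ β).map Symbol.terminal)).1 (Symbol.nonterminal B) ≠ ∅ := by
      rw [uNextStar_fst]
      exact rchain_ntshift (RChain.step hch hr hri hro)
    have htarget : uNext g (CollCong g)
        (uNextStar g (CollCong g) (uStart g (CollCong g)) ((u' ++ β).map Symbol.terminal))
        (Symbol.nonterminal B)
        = uNextStar g (CollCong g) (uStart g (CollCong g))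
            (u'.map Symbol.terminal ++ r.output) := by
      rw [← uNextStar_concat]
      congr 1
      rw [hro, List.map_append]
      simp
    have hpred : (some A', [], r.output) ∈ nextStar g (start g) (u'.map Symbol.terminal) :=
      rchain_pred hch r hr hri
    obtain ⟨qf, hfin, hpath⟩ := ih r.output hpred
    refine ⟨qf, hfin, FPath.eps ?_ hpath⟩
    exact ⟨B, α, _, hU, hcomp, hα', (uNextStar_append _ _ _ _).symm, hne, htarget⟩

/-- Shifting a chain's word from the start state. -/
lemma rchain_fpath {u : List T} {A : g.NT} (hchain : RChain g u A) :
    FPath g (CollCong g) (uStart g (CollCong g)) u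
      (uNextStar g (CollCong g) (uStart g (CollCong g)) (u.map Symbol.terminal)) := by
  induction hchain with
  | base => exact FPath.refl _
  | @step u' A' B β r hch hr hri hro ih =>
    have hpred := rchain_pred hch r hr hri
    rw [hro] at hpred
    have hshift := fpath_shifts hpred
    have := ih.trans hshift
    simpa using this

end LRApprox
namespace LRApprox

variable {T : Type uT'} {g : ContextFreeGrammar.{uN'} T}

/-- Step-counted derivations. -/
inductive NDer (g : ContextFreeGrammar.{uN'} T) :
    ℕ → List (Symbol T g.NT) → List (Symbol T g.NT) → Prop
  | refl (x : List (Symbol T g.NT)) : NDer g 0 x x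
  | head {n : ℕ} {x y z : List (Symbol T g.NT)} :
      g.Produces x y → NDer g n y z → NDer g (n + 1) x z

lemma NDer.tail {n : ℕ} {x y z : List (Symbol T g.NT)}
    (h : NDer g n x y) (h2 : g.Produces y z) : NDer g (n + 1) x z := by
  induction h with
  | refl => exact NDer.head h2 (NDer.refl _)
  | head hp _ ih => exact NDer.head hp (ih h2)

lemma derives_nder {x y : List (Symbol T g.NT)} (h : g.Derives x y) : ∃ n, NDer g n x y := by
  induction h with
  | refl => exact ⟨0, NDer.refl _⟩
  | tail _ hstep ih =>
    obtain ⟨n, hn⟩ := ih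
    exact ⟨n + 1, hn.tail hstep⟩

lemma nder_cases {n : ℕ} {x z : List (Symbol T g.NT)} (h : NDer g n x z) :
    (n = 0 ∧ x = z) ∨ ∃ m y, n = m + 1 ∧ g.Produces x y ∧ NDer g m y z := by
  cases h with
  | refl => exact Or.inl ⟨rfl, rfl⟩
  | head hp hd => exact Or.inr ⟨_, _, rfl, hp, hd⟩

lemma map_terminal_injective :
    Function.Injective (List.map (Symbol.terminal : T → Symbol T g.NT)) := by
  apply List.map_injective_iff.mpr
  intro a b hab
  exact Symbol.terminal.injEq _ _ ▸ hab

lemma split_terminal_prefix {β : List T} :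
    ∀ {y pp qq : List (Symbol T g.NT)} {i : g.NT},
    β.map Symbol.terminal ++ y = pp ++ [Symbol.nonterminal i] ++ qq →
    ∃ pp', pp = β.map Symbol.terminal ++ pp' ∧ y = pp' ++ [Symbol.nonterminal i] ++ qq := by
  induction β with
  | nil => intro y pp qq i h; exact ⟨pp, by simp, by simpa using h⟩
  | cons b β' ih =>
    intro y pp qq i h
    cases pp with
    | nil => simp at h
    | cons p0 pp₀ =>
      simp only [List.map_cons, List.cons_append, List.cons.injEq] at h
      obtain ⟨rfl, h2⟩ := h
      obtain ⟨pp', rfl, hy⟩ := ih h2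
      exact ⟨pp', by simp, hy⟩

lemma nder_strip {n : ℕ} {x z : List (Symbol T g.NT)} (h : NDer g n x z) :
    ∀ {β : List T} {y : List (Symbol T g.NT)} {w : List T},
    x = β.map Symbol.terminal ++ y → z = w.map Symbol.terminal →
    ∃ (v : List T) (m : ℕ), m ≤ n ∧ w = β ++ v ∧ NDer g m y (v.map Symbol.terminal) := by
  induction h with
  | refl x =>
    intro β y w h1 h2
    have h3 : w.map Symbol.terminal = β.map Symbol.terminal ++ y := h2.symm.trans h1
    rw [List.map_eq_append_iff] at h3
    obtain ⟨w₁, w₂, rfl, hw₁, hw₂⟩ := h3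
    obtain rfl : w₁ = β := map_terminal_injective hw₁
    exact ⟨w₂, 0, le_refl _, rfl, hw₂ ▸ NDer.refl _⟩
  | @head n x y' z hp hder ih =>
    intro β y w h1 h2
    subst h1
    obtain ⟨r, hr, hrew⟩ := hp
    obtain ⟨pp, qq, heq, rfl⟩ := hrew.exists_parts
    obtain ⟨pp', rfl, rfl⟩ := split_terminal_prefix heq
    obtain ⟨v, m, hm, hw, hder2⟩ := ih (β := β) (y := pp' ++ r.output ++ qq) (by simp) h2
    refine ⟨v, m + 1, by omega, hw, ?_⟩
    exact NDer.head ⟨r, hr, ContextFreeRule.rewrites_of_exists_parts r pp' qq⟩ hder2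

lemma nder_nil_nil {n : ℕ} {w : List T}
    (h : NDer g n ([] : List (Symbol T g.NT)) (w.map Symbol.terminal)) : w = [] := by
  rcases nder_cases h with ⟨-, heq⟩ | ⟨m, y, -, ⟨r, -, hrew⟩, -⟩
  · cases w with
    | nil => rfl
    | cons a w' => exact absurd heq (by simp)
  · obtain ⟨pp, qq, heq2, -⟩ := hrew.exists_parts
    exact absurd heq2 (by simp)

/-- Decomposition of a right-linear derivation into a chain plus a final rule. -/
lemma nder_decomp (hg : RightLinear g) :
    ∀ n : ℕ, ∀ {A : g.NT} {u v : List T},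
    NDer g n [Symbol.nonterminal A] (v.map Symbol.terminal) → RChain g u A →
    ∃ (u' β : List T) (B : g.NT) (r : ContextFreeRule T g.NT),
      RChain g u' B ∧ r ∈ g.rules ∧ r.input = B ∧ r.output = β.map Symbol.terminal ∧
      u' ++ β = u ++ v := by
  intro n
  induction n using Nat.strong_induction_on with
  | _ n ih =>
    intro A u v h hchain
    rcases nder_cases h with ⟨-, heq⟩ | ⟨m, y, rfl, ⟨r₀, hr₀, hrew⟩, hder⟩
    · exfalso
      cases v with
      | nil => exact absurd heq (by simp)
      | cons a v' => exact absurd heq (by simp)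
    · obtain ⟨pp, qq, heq2, rfl⟩ := hrew.exists_parts
      have hppqq : pp = [] ∧ r₀.input = A ∧ qq = [] := by
        cases pp with
        | nil =>
          simp only [List.nil_append, List.cons_append, List.cons.injEq] at heq2
          obtain ⟨h1, h2⟩ := heq2
          exact ⟨rfl, (Symbol.nonterminal.injEq _ _ ▸ h1).symm, h2.symm⟩
        | cons p0 pp₀ =>
          exfalso
          simp only [List.cons_append, List.cons.injEq] at heq2
          exact absurd heq2.2 (by simp)
      obtain ⟨rfl, hri, rfl⟩ := hppqq
      simp only [List.nil_append, List.append_nil] at hder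
      rcases hg r₀ hr₀ with ⟨δ, hδ⟩ | ⟨B, δ, hδ⟩
      · -- final rule
        rw [hδ] at hder
        obtain ⟨v₂, m₂, hm₂, rfl, hder2⟩ :=
          nder_strip hder (β := δ) (y := []) (by simp) rfl
        obtain rfl : v₂ = [] := nder_nil_nil hder2
        exact ⟨u, δ, A, r₀, hchain, hr₀, hri, hδ, by simp⟩
      · -- chain rule
        rw [hδ] at hder
        obtain ⟨v₂, m₂, hm₂, rfl, hder2⟩ :=
          nder_strip hder (β := δ) (y := [Symbol.nonterminal B]) rfl rfl
        have hchain2 : RChain g (u ++ δ) B := RChain.step hchain hr₀ hri hδ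
        obtain ⟨u', β, B', r', hc, hr', hri', hro', heq3⟩ :=
          ih m₂ (by omega) hder2 hchain2
        exact ⟨u', β, B', r', hc, hr', hri', hro', by rw [heq3, List.append_assoc]⟩

lemma faccepts_complete (hg : RightLinear g) {w : List T} (hw : w ∈ g.language) :
    FAccepts g (CollCong g) w := by
  rw [ContextFreeGrammar.mem_language_iff] at hw
  obtain ⟨n, hn⟩ := derives_nder hw
  obtain ⟨u, β, B, r, hchain, hr, hri, hro, heq⟩ := nder_decomp hg n hn RChain.base
  simp only [List.nil_append] at heq
  subst heq
  -- shift u, then β, then reduce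
  have hpred := rchain_pred hchain r hr hri
  have hpath1 := rchain_fpath hchain
  have hpredβ : (some B, [], β.map Symbol.terminal ++ ([] : List (Symbol T g.NT)))
      ∈ nextStar g (start g) (u.map Symbol.terminal) := by
    rw [List.append_nil, ← hro]
    exact hpred
  have hpath2 := fpath_shifts hpredβ
  obtain ⟨qf, hfin, hpath3⟩ := eps_chain hchain r.output hpred
  rw [hro] at hpath3
  have hpath3' : FPath g (CollCong g)
      (uNextStar g (CollCong g) (uStart g (CollCong g)) ((u ++ β).map Symbol.terminal)) [] qf := by
    rw [List.map_append]
    exact hpath3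
  refine ⟨qf, hfin, ?_⟩
  have := (hpath1.trans hpath2).trans hpath3'
  simpa using this

end LRApprox

/-- For a right-linear CFG `G`, the FSA `F` derived from `G`
by the basic approximation algorithm (the flattening of the recognizer
unfolded by the collapsing stack congruence) satisfies `L(G) = L(F)`. -/
theorem right_linear_exact {T : Type*} (g : LRApprox.ContextFreeGrammar T)
    (hg : RightLinear g) :
    ∀ w : List T, w ∈ g.language ↔ FAccepts g (CollCong g) w := by
  intro w
  exact ⟨fun h => LRApprox.faccepts_complete hg h, fun h => LRApprox.faccepts_sound hg h⟩
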